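/- For purposive discrete distributions F and G, the following are equivalent: (i) F ≼_∧ G and G ≼_∧ F; (ii) F ≼_∨ G and G ≼_∨ F; (iii) there exists λ ∈ ℝ with G(t) = F(t - λ) for all t ∈ ℝ. -/

import Mathlib

/-- A purposive discrete distribution: support indexed by an interval of `ℤ`
with at least two elements, strictly increasing support points `x` and
positive probabilities `p` summing to one. -/
structure DiscDist where
  A : Set ℤ
  x : ℤ → ℝ
  p : ℤ → ℝ
  hA2 : ∃ a b, a ∈ A ∧ b ∈ A ∧ a ≠ b
  hAconn : ∀ a b c : ℤ, a ∈ A → c ∈ A → a ≤ b → b ≤ c → b ∈ A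
  hmono : ∀ a b : ℤ, a ∈ A → b ∈ A → a < b → x a < x b
  hpos : ∀ a ∈ A, 0 < p a
  hzero : ∀ a ∉ A, p a = 0
  hsummable : Summable p
  hsum : ∑' a, p a = 1

/-- Cumulative probability strictly below index `a`, i.e. `F(x_{a-1})`. -/
noncomputable def DiscDist.L (D : DiscDist) (a : ℤ) : ℝ :=
  ∑' i : ℤ, if i < a then D.p i else 0

namespace DiscDist
variable (D : DiscDist)

lemma p_nonneg (a : ℤ) : 0 ≤ D.p a := by
  by_cases h : a ∈ D.A
  · exact (D.hpos a h).le
  · exact (D.hzero a h).ge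

lemma mem_of_p_pos {a : ℤ} (h : 0 < D.p a) : a ∈ D.A := by
  by_contra hA; rw [D.hzero a hA] at h; exact lt_irrefl _ h

lemma summable_ite (s : ℤ → Prop) [DecidablePred s] :
    Summable (fun i => if s i then D.p i else 0) := by
  apply (D.hsummable.indicator {i | s i}).congr
  intro i
  simp [Set.indicator_apply, Set.mem_setOf_eq]

lemma L_mono {a b : ℤ} (h : a ≤ b) : D.L a ≤ D.L b := by
  apply Summable.tsum_le_tsum _ (D.summable_ite _) (D.summable_ite _)
  intro i
  by_cases hi : i < a
  · simp [hi, lt_of_lt_of_le hi h]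
  · simp only [hi, if_false]
    by_cases hib : i < b <;> simp [hib, D.p_nonneg i]

lemma L_nonneg (a : ℤ) : 0 ≤ D.L a := by
  apply tsum_nonneg; intro i
  by_cases hi : i < a <;> simp [hi, D.p_nonneg i]

lemma L_succ (a : ℤ) : D.L (a + 1) = D.L a + D.p a := by
  have h : ∀ i : ℤ, (if i < a + 1 then D.p i else 0)
      = (if i < a then D.p i else 0) + (if i = a then D.p a else 0) := by
    intro i
    rcases lt_trichotomy i a with h1 | h1 | h1
    · rw [if_pos h1, if_pos (by omega : i < a + 1), if_neg (by omega : ¬ i = a), add_zero]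
    · subst h1
      rw [if_pos (by omega : i < i + 1), if_neg (by omega : ¬ i < i), if_pos rfl, zero_add]
    · rw [if_neg (by omega : ¬ i < a + 1), if_neg (by omega : ¬ i < a),
        if_neg (by omega : ¬ i = a), add_zero]
  rw [DiscDist.L, tsum_congr h, Summable.tsum_add (D.summable_ite _)
    ⟨D.p a, hasSum_ite_eq a (D.p a)⟩, tsum_ite_eq]
  rfl

lemma L_le_one (a : ℤ) : D.L a ≤ 1 := by
  rw [← D.hsum]
  apply Summable.tsum_le_tsum _ (D.summable_ite _) D.hsummable
  intro i
  by_cases hi : i < a <;> simp [hi, D.p_nonneg i]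

lemma exists_finset_sum_gt {c : ℝ} (hc : c < 1) : ∃ s : Finset ℤ, c < ∑ i ∈ s, D.p i := by
  have h1 : HasSum D.p 1 := D.hsum ▸ D.hsummable.hasSum
  have := h1.eventually (Ioi_mem_nhds hc)
  exact this.exists

lemma exists_L_lt {u : ℝ} (hu : 0 < u) : ∃ a, D.L a < u := by
  obtain ⟨s, hs⟩ := D.exists_finset_sum_gt (by linarith : 1 - u < 1)
  rcases s.eq_empty_or_nonempty with rfl | hne
  · simp at hs
    exact ⟨0, lt_of_le_of_lt (D.L_le_one 0) (by linarith)⟩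
  · refine ⟨s.min' hne, ?_⟩
    have key : D.L (s.min' hne) + ∑ i ∈ s, D.p i ≤ 1 := by
      rw [← D.hsum]
      have hsum_eq : ∑ i ∈ s, D.p i = ∑' i, (if i ∈ s then D.p i else 0) := by
        rw [tsum_eq_sum (s := s) (by intro b hb; simp [hb])]
        apply Finset.sum_congr rfl; intro i hi; simp [hi]
      rw [hsum_eq, DiscDist.L, ← Summable.tsum_add (D.summable_ite _) (D.summable_ite _)]
      apply Summable.tsum_le_tsum _ (Summable.add (D.summable_ite _) (D.summable_ite _)) D.hsummable
      intro i
      by_cases h1 : i < s.min' hne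
      · have h2 : i ∉ s := fun hm => absurd (s.min'_le i hm) (by omega)
        simp [h1, h2]
      · by_cases h2 : i ∈ s <;> simp [h1, h2, D.p_nonneg i]
    linarith

lemma exists_lt_L {u : ℝ} (hu : u < 1) : ∃ a, u < D.L a := by
  obtain ⟨s, hs⟩ := D.exists_finset_sum_gt hu
  rcases s.eq_empty_or_nonempty with rfl | hne
  · simp at hs
    exact ⟨0, lt_of_lt_of_le hs (D.L_nonneg 0)⟩
  · refine ⟨s.max' hne + 1, lt_of_lt_of_le hs ?_⟩
    have : ∑ i ∈ s, D.p i = ∑ i ∈ s, (if i < s.max' hne + 1 then D.p i else 0) := by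
      apply Finset.sum_congr rfl
      intro i hi
      have := s.le_max' i hi
      simp [show i < s.max' hne + 1 by omega]
    rw [this]
    exact Summable.sum_le_tsum s (fun i _ => by by_cases h : i < s.max' hne + 1 <;> simp [h, D.p_nonneg i])
      (D.summable_ite _)

lemma L_add {b c : ℤ} (h : b ≤ c) : D.L c = D.L b + ∑ i ∈ Finset.Ico b c, D.p i := by
  have key : ∀ n : ℕ, D.L (b + n) = D.L b + ∑ i ∈ Finset.Ico b (b + n), D.p i := by
    intro n
    induction n with
    | zero => simp
    | succ n ih =>
        have h1 : b + ((n : ℤ) + 1) = (b + n) + 1 := by ring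
        have h2 : (((n : ℕ) + 1 : ℕ) : ℤ) = (n : ℤ) + 1 := by push_cast; ring
        have h3 : Finset.Ico b (b + (n : ℤ) + 1) = insert (b + (n : ℤ)) (Finset.Ico b (b + (n : ℤ))) := by
          ext i
          simp only [Finset.mem_Ico, Finset.mem_insert]
          omega
        rw [h2, h1, D.L_succ, ih, h3, Finset.sum_insert (by simp [Finset.mem_Ico])]
        ring
  have hn : c = b + ((c - b).toNat : ℤ) := by omega
  rw [hn, key]

lemma exists_mem_of_L_lt {b c : ℤ} (h : D.L b < D.L c) : ∃ i, b ≤ i ∧ i < c ∧ i ∈ D.A := by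
  have hbc : b ≤ c := by
    by_contra hh
    exact absurd (D.L_mono (by omega : c ≤ b)) (by linarith)
  rw [D.L_add hbc] at h
  have : ∑ i ∈ Finset.Ico b c, D.p i ≠ 0 := by intro h0; rw [h0] at h; linarith
  obtain ⟨i, hi, hne⟩ := Finset.exists_ne_zero_of_sum_ne_zero this
  rw [Finset.mem_Ico] at hi
  exact ⟨i, hi.1, hi.2, D.mem_of_p_pos (lt_of_le_of_ne (D.p_nonneg i) (Ne.symm hne))⟩

lemma mem_succ {a : ℤ} (ha : a ∈ D.A) (h : D.L (a + 1) < 1) : a + 1 ∈ D.A := by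
  obtain ⟨c, hc⟩ := D.exists_lt_L h
  obtain ⟨i, h1, _, hiA⟩ := D.exists_mem_of_L_lt hc
  exact D.hAconn a (a + 1) i ha hiA (by omega) (by omega)

lemma mem_pred {a : ℤ} (ha : a ∈ D.A) (h : 0 < D.L a) : a - 1 ∈ D.A := by
  obtain ⟨c, hc⟩ := D.exists_L_lt h
  obtain ⟨i, _, h2, hiA⟩ := D.exists_mem_of_L_lt hc
  exact D.hAconn i (a - 1) a hiA ha (by omega) (by omega)

lemma L_lt_succ {a : ℤ} (ha : a ∈ D.A) : D.L a < D.L (a + 1) := by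
  rw [D.L_succ]; linarith [D.hpos a ha]

lemma L_injOn {b b' : ℤ} (hb : b ∈ D.A) (hb' : b' ∈ D.A) (h : D.L b = D.L b') : b = b' := by
  rcases lt_trichotomy b b' with hlt | heq | hgt
  · have h1 := D.L_lt_succ hb
    have h2 := D.L_mono (by omega : b + 1 ≤ b')
    linarith
  · exact heq
  · have h1 := D.L_lt_succ hb'
    have h2 := D.L_mono (by omega : b' + 1 ≤ b)
    linarith

lemma x_injOn {b b' : ℤ} (hb : b ∈ D.A) (hb' : b' ∈ D.A) (h : D.x b = D.x b') : b = b' := by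
  rcases lt_trichotomy b b' with hlt | heq | hgt
  · exact absurd (D.hmono b b' hb hb' hlt) (by linarith)
  · exact heq
  · exact absurd (D.hmono b' b hb' hb hgt) (by linarith)

end DiscDist

/-- The relation `a ▷◁ b`: the jump intervals `(F(x_{a-1}), F(x_a))` and
`(G(y_{b-1}), G(y_b))` intersect. -/
def DRel (F G : DiscDist) (a b : ℤ) : Prop :=
  a ∈ F.A ∧ b ∈ G.A ∧
    max (F.L a) (G.L b) < min (F.L (a + 1)) (G.L (b + 1))

/-- The ∧-discrete dispersive order `F ≼_∧ G`. -/
def discoA (F G : DiscDist) : Prop :=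
  (∀ a b, DRel F G a b → G.p b ≤ F.p a) ∧
  (∀ a b, DRel F G a b → DRel F G (a - 1) (b - 1) →
    F.x a - F.x (a - 1) ≤ G.x b - G.x (b - 1))

/-- The ∨-discrete dispersive order `F ≼_∨ G`. -/
def discoO (F G : DiscDist) : Prop :=
  (∀ a b, DRel F G a b → G.p b ≤ F.p a) ∧
  (∀ a b, a ∈ F.A → a - 1 ∈ F.A → b ∈ G.A → b - 1 ∈ G.A →
    (DRel F G a b ∨ DRel F G (a - 1) (b - 1)) →
    F.x a - F.x (a - 1) ≤ G.x b - G.x (b - 1))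

/-- Cumulative distribution function of a discrete distribution. -/
noncomputable def DiscDist.cdf (D : DiscDist) (t : ℝ) : ℝ :=
  ∑' a : ℤ, if D.x a ≤ t then D.p a else 0

lemma drel_symm {F G : DiscDist} {a b : ℤ} (h : DRel F G a b) : DRel G F b a := by
  obtain ⟨h1, h2, h3⟩ := h
  exact ⟨h2, h1, by rw [max_comm, min_comm]; exact h3⟩

lemma exists_mem_Ioo_not_mem {x y : ℝ} (h : x < y) {S : Set ℝ} (hS : S.Countable) :
    ∃ u, x < u ∧ u < y ∧ u ∉ S := by
  by_contra hc
  push_neg at hc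
  have hsub : Set.Ioo x y ⊆ S := fun u hu => hc u hu.1 hu.2
  have h1 := MeasureTheory.measure_mono (μ := MeasureTheory.volume) hsub
  rw [hS.measure_zero] at h1
  rw [Real.volume_Ioo] at h1
  have := le_antisymm h1 zero_le
  rw [ENNReal.ofReal_eq_zero] at this
  linarith

/-- Find the jump interval of `G` containing `u`, provided `u` avoids the
countable set of values of `G.L`. -/
lemma find_interval (G : DiscDist) {u : ℝ} (h0 : 0 < u) (h1 : u < 1)
    (hne : ∀ b, u ≠ G.L b) : ∃ b, b ∈ G.A ∧ G.L b < u ∧ u < G.L (b + 1) := by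
  obtain ⟨c, hc⟩ := G.exists_lt_L h1
  obtain ⟨d, hd⟩ := G.exists_L_lt h0
  obtain ⟨b, hbP, hbmax⟩ := Int.exists_greatest_of_bdd
    (P := fun b => G.L b < u)
    ⟨c, fun z hz => by
      by_contra hzc
      exact absurd (G.L_mono (by omega : c ≤ z)) (by linarith)⟩
    ⟨d, hd⟩
  have hub : u ≤ G.L (b + 1) := by
    by_contra hh
    exact absurd (hbmax (b + 1) (by linarith)) (by omega)
  have hub' : u < G.L (b + 1) := lt_of_le_of_ne hub (hne (b + 1))
  have hb : b ∈ G.A := by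
    apply G.mem_of_p_pos
    have := G.L_succ b
    by_contra hp
    push_neg at hp
    have hp0 : G.p b = 0 := le_antisymm hp (G.p_nonneg b)
    rw [hp0, add_zero] at this
    rw [this] at hub'
    linarith
  exact ⟨b, hb, hbP, hub'⟩

lemma exists_drel (F G : DiscDist) {a : ℤ} (ha : a ∈ F.A) : ∃ b, DRel F G a b := by
  have hlt : F.L a < F.L (a + 1) := F.L_lt_succ ha
  obtain ⟨u, hu1, hu2, hu3⟩ := exists_mem_Ioo_not_mem hlt
    (Set.countable_range (fun b => G.L b))
  have hne : ∀ b, u ≠ G.L b := fun b hb => hu3 ⟨b, hb.symm⟩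
  obtain ⟨b, hbA, hb1, hb2⟩ := find_interval G
    (lt_of_le_of_lt (F.L_nonneg a) hu1)
    (lt_of_lt_of_le hu2 (F.L_le_one (a + 1))) hne
  refine ⟨b, ha, hbA, ?_⟩
  have hmax : max (F.L a) (G.L b) < u := max_lt hu1 hb1
  have hmin : u < min (F.L (a + 1)) (G.L (b + 1)) := lt_min hu2 hb2
  linarith

lemma drel_of {F G : DiscDist} {a b : ℤ} (ha : a ∈ F.A) (hb : b ∈ G.A)
    (h1 : G.L b < F.L (a + 1)) (h2 : F.L a < G.L (b + 1)) : DRel F G a b :=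
  ⟨ha, hb, max_lt (lt_min (F.L_lt_succ ha) h2) (lt_min h1 (G.L_lt_succ hb))⟩

lemma drel_lt {F G : DiscDist} {a b : ℤ} (h : DRel F G a b) :
    G.L b < F.L (a + 1) ∧ F.L a < G.L (b + 1) := by
  obtain ⟨_, _, h3⟩ := h
  constructor
  · exact lt_of_le_of_lt (le_max_right _ _) (lt_of_lt_of_le h3 (min_le_left _ _))
  · exact lt_of_le_of_lt (le_max_left _ _) (lt_of_lt_of_le h3 (min_le_right _ _))

lemma ascent (F G : DiscDist) (H : ∀ a b, DRel F G a b → F.p a = G.p b) {a b : ℤ}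
    (hr : DRel F G a b) : ¬ F.L a < G.L b := by
  intro hlt
  have haA : a ∈ F.A := hr.1
  have hbB : b ∈ G.A := hr.2.1
  set δ := G.L b - F.L a with hδ
  set q := F.p a with hq
  have hqpos : 0 < q := F.hpos a haA
  have hp : q = G.p b := H a b hr
  have hδpos : 0 < δ := by rw [hδ]; linarith
  have hδlt : δ < q := by
    have h1 := (drel_lt hr).1
    have h2 := F.L_succ a
    rw [hδ]; rw [← hq] at h2; linarith
  have Q : ∀ n : ℕ, (a + n ∈ F.A) ∧ (b + n ∈ G.A) ∧
      (G.L (b + n) = F.L (a + n) + δ) ∧ (F.p (a + n) = q) ∧ (G.p (b + n) = q) := by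
    intro n
    induction n with
    | zero =>
        refine ⟨by simpa using haA, by simpa using hbB, by simp [hδ], by simp [hq], by simp [hp.symm]⟩
    | succ n ih =>
        obtain ⟨ha', hb', hL, hpa, hpb⟩ := ih
        have c1 : a + ((n + 1 : ℕ) : ℤ) = (a + n) + 1 := by push_cast; ring
        have c2 : b + ((n + 1 : ℕ) : ℤ) = (b + n) + 1 := by push_cast; ring
        set s := a + (n : ℤ)
        set t := b + (n : ℤ)
        rw [c1, c2]
        have hLa1 : F.L (s + 1) = F.L s + q := by rw [F.L_succ, hpa]
        have hLb1 : G.L (t + 1) = F.L (s + 1) + δ := by rw [G.L_succ, hpb, hL, hLa1]; ring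
        have haA1 : s + 1 ∈ F.A := by
          apply F.mem_succ ha'
          have := G.L_le_one (t + 1)
          linarith
        have hr1 : DRel F G (s + 1) t := by
          apply drel_of haA1 hb'
          · have h1 : F.L (s + 1) < F.L (s + 1 + 1) := F.L_lt_succ haA1
            linarith
          · linarith
        have hpa1 : F.p (s + 1) = q := by rw [H _ _ hr1, hpb]
        have hLa2 : F.L (s + 1 + 1) = F.L (s + 1) + q := by rw [F.L_succ, hpa1]
        have hbB1 : t + 1 ∈ G.A := by
          apply G.mem_succ hb'
          have := F.L_le_one (s + 1 + 1)
          linarith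
        have hr2 : DRel F G (s + 1) (t + 1) := by
          apply drel_of haA1 hbB1
          · linarith
          · have := G.L_lt_succ hbB1
            linarith
        have hpb1 : G.p (t + 1) = q := by rw [← H _ _ hr2, hpa1]
        exact ⟨haA1, hbB1, hLb1, hpa1, hpb1⟩
  have grow : ∀ n : ℕ, F.L (a + n) = F.L a + n * q := by
    intro n
    induction n with
    | zero => simp
    | succ n ih =>
        have c1 : a + ((n + 1 : ℕ) : ℤ) = (a + n) + 1 := by push_cast; ring
        rw [c1, F.L_succ, (Q n).2.2.2.1, ih]
        push_cast; ring
  obtain ⟨n, hn⟩ := exists_nat_gt ((1 - F.L a) / q)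
  have hnq : 1 - F.L a < n * q := by
    rw [div_lt_iff₀ hqpos] at hn
    linarith
  have := F.L_le_one (a + n)
  rw [grow n] at this
  linarith

lemma rigid (F G : DiscDist) (H : ∀ a b, DRel F G a b → F.p a = G.p b) {a b : ℤ}
    (hr : DRel F G a b) : F.L a = G.L b := by
  have H' : ∀ b a, DRel G F b a → G.p b = F.p a := fun b a h => (H a b (drel_symm h)).symm
  exact le_antisymm (not_lt.mp (ascent G F H' (drel_symm hr))) (not_lt.mp (ascent F G H hr))

lemma drel_succ (F G : DiscDist) (H : ∀ a b, DRel F G a b → F.p a = G.p b) {s t : ℤ}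
    (hst : DRel F G s t) (hs1 : s + 1 ∈ F.A) : DRel F G (s + 1) (t + 1) := by
  have hL := rigid F G H hst
  have hpe := H _ _ hst
  have hLa1 : F.L (s + 1) = G.L (t + 1) := by rw [F.L_succ, G.L_succ, hL, hpe]
  have htB : t + 1 ∈ G.A := by
    apply G.mem_succ hst.2.1
    have h1 := F.L_le_one (s + 1 + 1)
    have h2 := F.L_lt_succ hs1
    linarith
  apply drel_of hs1 htB
  · have := F.L_lt_succ hs1
    linarith
  · have := G.L_lt_succ htB
    linarith

lemma drel_pred (F G : DiscDist) (H : ∀ a b, DRel F G a b → F.p a = G.p b) {s t : ℤ}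
    (hst : DRel F G s t) (hs1 : s - 1 ∈ F.A) : DRel F G (s - 1) (t - 1) := by
  have hL := rigid F G H hst
  have e1 : s - 1 + 1 = s := by ring
  have e2 : t - 1 + 1 = t := by ring
  have h1 : F.L s = F.L (s - 1) + F.p (s - 1) := by
    have := F.L_succ (s - 1); rw [e1] at this; exact this
  have hpos := F.hpos _ hs1
  have hnn := F.L_nonneg (s - 1)
  have hs0 : 0 < F.L s := by linarith
  have htB : t - 1 ∈ G.A := G.mem_pred hst.2.1 (hL ▸ hs0)
  have h2 : G.L t = G.L (t - 1) + G.p (t - 1) := by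
    have := G.L_succ (t - 1); rw [e2] at this; exact this
  have hpos2 := G.hpos _ htB
  apply drel_of hs1 htB
  · rw [e1]; linarith
  · rw [e2]; linarith

lemma match_all (F G : DiscDist) (H : ∀ a b, DRel F G a b → F.p a = G.p b) {a0 b0 : ℤ}
    (h0 : DRel F G a0 b0) : ∀ a ∈ F.A, DRel F G a (a + (b0 - a0)) := by
  have up : ∀ n : ℕ, a0 + n ∈ F.A → DRel F G (a0 + n) (b0 + n) := by
    intro n
    induction n with
    | zero => intro _; simpa using h0
    | succ n ih =>
        intro hmem
        have c1 : a0 + ((n + 1 : ℕ) : ℤ) = (a0 + n) + 1 := by push_cast; ring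
        have c2 : b0 + ((n + 1 : ℕ) : ℤ) = (b0 + n) + 1 := by push_cast; ring
        rw [c1] at hmem ⊢
        rw [c2]
        have hprev : a0 + (n : ℤ) ∈ F.A :=
          F.hAconn a0 (a0 + n) (a0 + n + 1) h0.1 hmem (by omega) (by omega)
        exact drel_succ F G H (ih hprev) hmem
  have down : ∀ n : ℕ, a0 - n ∈ F.A → DRel F G (a0 - n) (b0 - n) := by
    intro n
    induction n with
    | zero => intro _; simpa using h0
    | succ n ih =>
        intro hmem
        have c1 : a0 - ((n + 1 : ℕ) : ℤ) = (a0 - n) - 1 := by push_cast; ring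
        have c2 : b0 - ((n + 1 : ℕ) : ℤ) = (b0 - n) - 1 := by push_cast; ring
        rw [c1] at hmem ⊢
        rw [c2]
        have hprev : a0 - (n : ℤ) ∈ F.A :=
          F.hAconn (a0 - n - 1) (a0 - n) a0 hmem h0.1 (by omega) (by omega)
        exact drel_pred F G H (ih hprev) hmem
  intro a ha
  rcases le_or_gt a0 a with hle | hlt
  · have e : a = a0 + ((a - a0).toNat : ℤ) := by omega
    have e2 : a + (b0 - a0) = b0 + ((a - a0).toNat : ℤ) := by omega
    rw [e2]
    have := up (a - a0).toNat (by rw [← e]; exact ha)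
    rwa [← e] at this
  · have e : a = a0 - ((a0 - a).toNat : ℤ) := by omega
    have e2 : a + (b0 - a0) = b0 - ((a0 - a).toNat : ℤ) := by omega
    rw [e2]
    have := down (a0 - a).toNat (by rw [← e]; exact ha)
    rwa [← e] at this

lemma main_struct (F G : DiscDist) (hAA : discoA F G ∧ discoA G F) :
    ∃ k : ℤ, (∀ a b, DRel F G a b → b = a + k) ∧
      (∀ a : ℤ, (a ∈ F.A ↔ a + k ∈ G.A)) ∧
      (∀ a : ℤ, G.p (a + k) = F.p a) ∧
      (∀ a ∈ F.A, DRel F G a (a + k)) ∧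
      ∃ l : ℝ, ∀ a ∈ F.A, G.x (a + k) = F.x a + l := by
  have H : ∀ a b, DRel F G a b → F.p a = G.p b := fun a b hr =>
    le_antisymm (hAA.2.1 b a (drel_symm hr)) (hAA.1.1 a b hr)
  have H' : ∀ b a, DRel G F b a → G.p b = F.p a := fun b a h => (H a b (drel_symm h)).symm
  obtain ⟨a0, -, ha0, -, -⟩ := F.hA2
  obtain ⟨b0, h0⟩ := exists_drel F G ha0
  set k := b0 - a0 with hk
  have hFk : ∀ a ∈ F.A, DRel F G a (a + k) := match_all F G H h0
  have hGk : ∀ b ∈ G.A, DRel F G (b - k) b := by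
    intro b hb
    have := match_all G F H' (drel_symm h0) b hb
    have e : b + (a0 - b0) = b - k := by omega
    rw [e] at this
    exact drel_symm this
  have hmem : ∀ a : ℤ, (a ∈ F.A ↔ a + k ∈ G.A) := by
    intro a
    constructor
    · intro ha; exact (hFk a ha).2.1
    · intro hb
      have := hGk (a + k) hb
      have e : a + k - k = a := by omega
      rw [e] at this
      exact this.1
  have hforce : ∀ a b, DRel F G a b → b = a + k := by
    intro a b hr
    have h1 := rigid F G H hr
    have h2 := rigid F G H (hFk a hr.1)
    exact G.L_injOn hr.2.1 ((hFk a hr.1).2.1) (h1 ▸ h2)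
  have hp : ∀ a : ℤ, G.p (a + k) = F.p a := by
    intro a
    by_cases ha : a ∈ F.A
    · exact (H a (a + k) (hFk a ha)).symm
    · rw [F.hzero a ha, G.hzero (a + k) (fun hb => ha ((hmem a).mpr hb))]
  have hFk2 : ∀ a, a ∈ F.A → a - 1 ∈ F.A → DRel F G (a - 1) (a + k - 1) := by
    intro a ha ha'
    have := hFk (a - 1) ha'
    have e : a - 1 + k = a + k - 1 := by omega
    rwa [e] at this
  have hxdiff : ∀ a, a ∈ F.A → a - 1 ∈ F.A →
      F.x a - F.x (a - 1) = G.x (a + k) - G.x (a + k - 1) := by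
    intro a ha ha'
    have h1 := hFk a ha
    have h2 := hFk2 a ha ha'
    have le1 := hAA.1.2 a (a + k) h1 h2
    have le2 := hAA.2.2 (a + k) a (drel_symm h1) (drel_symm h2)
    linarith
  refine ⟨k, hforce, hmem, hp, hFk, G.x (a0 + k) - F.x a0, ?_⟩
  have up : ∀ n : ℕ, a0 + n ∈ F.A →
      G.x (a0 + n + k) = F.x (a0 + n) + (G.x (a0 + k) - F.x a0) := by
    intro n
    induction n with
    | zero => intro _; norm_num
    | succ n ih =>
        intro hmem'
        have c1 : a0 + ((n + 1 : ℕ) : ℤ) = (a0 + n) + 1 := by push_cast; ring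
        rw [c1] at hmem' ⊢
        have hprev : a0 + (n : ℤ) ∈ F.A :=
          F.hAconn a0 (a0 + n) (a0 + n + 1) ha0 hmem' (by omega) (by omega)
        have hm1 : a0 + (n : ℤ) + 1 - 1 ∈ F.A := by
          have e1 : a0 + (n : ℤ) + 1 - 1 = a0 + (n : ℤ) := by ring
          rw [e1]; exact hprev
        have hd := hxdiff (a0 + n + 1) hmem' hm1
        rw [show a0 + (n : ℤ) + 1 - 1 = a0 + (n : ℤ) from by ring,
            show a0 + (n : ℤ) + 1 + k - 1 = a0 + (n : ℤ) + k from by ring] at hd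
        have hih := ih hprev
        linarith
  have down : ∀ n : ℕ, a0 - n ∈ F.A →
      G.x (a0 - n + k) = F.x (a0 - n) + (G.x (a0 + k) - F.x a0) := by
    intro n
    induction n with
    | zero => intro _; norm_num
    | succ n ih =>
        intro hmem'
        have c1 : a0 - ((n + 1 : ℕ) : ℤ) = (a0 - n) - 1 := by push_cast; ring
        rw [c1] at hmem' ⊢
        have hprev : a0 - (n : ℤ) ∈ F.A :=
          F.hAconn (a0 - n - 1) (a0 - n) a0 hmem' ha0 (by omega) (by omega)
        have hm1 : a0 - (n : ℤ) - 1 ∈ F.A := hmem'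
        have hd := hxdiff (a0 - n) hprev (by
          rw [show a0 - (n : ℤ) - 1 = a0 - (n : ℤ) - 1 from rfl]; exact hm1)
        rw [show a0 - (n : ℤ) + k - 1 = a0 - (n : ℤ) - 1 + k from by ring] at hd
        have hih := ih hprev
        linarith
  intro a ha
  rcases le_or_gt a0 a with hle | hlt
  · have e : a = a0 + ((a - a0).toNat : ℤ) := by omega
    rw [e]
    exact up (a - a0).toNat (by rw [← e]; exact ha)
  · have e : a = a0 - ((a0 - a).toNat : ℤ) := by omega
    rw [e]
    exact down (a0 - a).toNat (by rw [← e]; exact ha)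

lemma discoA_of_discoO {F G : DiscDist} (h : discoO F G) : discoA F G :=
  ⟨h.1, fun a b hr hr' => h.2 a b hr.1 hr'.1 hr.2.1 hr'.2.1 (Or.inl hr)⟩

lemma discoO_of (F G : DiscDist) (hAA : discoA F G ∧ discoA G F) : discoO F G := by
  obtain ⟨k, hforce, hmem, hp, hFk, l, hx⟩ := main_struct F G hAA
  refine ⟨hAA.1.1, ?_⟩
  intro a b ha ha' hb hb' hcase
  have hbk : b = a + k := by
    rcases hcase with h | h
    · exact hforce a b h
    · have := hforce (a - 1) (b - 1) h; omega
  subst hbk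
  have h1 := hx a ha
  have h2 := hx (a - 1) ha'
  rw [show a - 1 + k = a + k - 1 from by ring] at h2
  rw [h1, h2]
  linarith

lemma cdf_of_struct (F G : DiscDist) (k : ℤ) (l : ℝ)
    (hmem : ∀ a : ℤ, (a ∈ F.A ↔ a + k ∈ G.A))
    (hp : ∀ a : ℤ, G.p (a + k) = F.p a)
    (hx : ∀ a ∈ F.A, G.x (a + k) = F.x a + l) :
    ∀ t : ℝ, G.cdf t = F.cdf (t - l) := by
  intro t
  have hre : G.cdf t = ∑' a : ℤ, (if G.x (a + k) ≤ t then G.p (a + k) else 0) := by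
    rw [DiscDist.cdf]
    exact ((Equiv.addRight k).tsum_eq (fun b => if G.x b ≤ t then G.p b else 0)).symm
  rw [hre, DiscDist.cdf]
  apply tsum_congr
  intro a
  by_cases ha : a ∈ F.A
  · rw [hx a ha, hp a]
    exact if_congr (by constructor <;> intro <;> linarith) rfl rfl
  · have h1 : F.p a = 0 := F.hzero a ha
    have h2 : G.p (a + k) = 0 := by rw [hp a]; exact h1
    simp [h1, h2]

namespace DiscDist

lemma cdf_mono (D : DiscDist) {s t : ℝ} (h : s ≤ t) : D.cdf s ≤ D.cdf t := by
  apply Summable.tsum_le_tsum _ (D.summable_ite _) (D.summable_ite _)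
  intro i
  by_cases hi : D.x i ≤ s
  · simp [hi, le_trans hi h]
  · simp only [hi, if_false]
    by_cases h2 : D.x i ≤ t <;> simp [h2, D.p_nonneg i]

lemma cdf_at (D : DiscDist) {a : ℤ} (ha : a ∈ D.A) : D.cdf (D.x a) = D.L (a + 1) := by
  apply tsum_congr
  intro i
  by_cases hi : i ∈ D.A
  · refine if_congr ⟨?_, ?_⟩ rfl rfl
    · intro hle
      by_contra hc
      exact absurd (D.hmono a i ha hi (by omega)) (by linarith)
    · intro hlt
      rcases eq_or_lt_of_le (by omega : i ≤ a) with heq | hlt'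
      · rw [heq]
      · exact (D.hmono i a hi ha hlt').le
  · simp [D.hzero i hi]

lemma le_cdf_iff (D : DiscDist) {a : ℤ} (ha : a ∈ D.A) {u : ℝ}
    (h1 : D.L a < u) (h2 : u ≤ D.L (a + 1)) (t : ℝ) :
    u ≤ D.cdf t ↔ D.x a ≤ t := by
  constructor
  · intro h
    by_contra hc
    push_neg at hc
    have hle : D.cdf t ≤ D.L a := by
      apply Summable.tsum_le_tsum _ (D.summable_ite _) (D.summable_ite _)
      intro i
      by_cases hi : i ∈ D.A
      · by_cases hia : i < a
        · by_cases hxi : D.x i ≤ t <;> simp [hxi, hia, D.p_nonneg i]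
        · have hxa : D.x a ≤ D.x i := by
            rcases eq_or_lt_of_le (by omega : a ≤ i) with heq | hlt'
            · rw [heq]
            · exact (D.hmono a i ha hi hlt').le
          have : ¬ D.x i ≤ t := by linarith
          simp [this, hia, D.p_nonneg i]
      · simp [D.hzero i hi]
    linarith
  · intro h
    calc u ≤ D.L (a + 1) := h2
    _ = D.cdf (D.x a) := (D.cdf_at ha).symm
    _ ≤ D.cdf t := D.cdf_mono h

end DiscDist

lemma pick_b (F G : DiscDist) (l : ℝ) (Hl : ∀ t : ℝ, G.cdf t = F.cdf (t - l)) {a : ℤ}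
    (ha : a ∈ F.A) {u : ℝ} (h1 : F.L a < u) (h2 : u < F.L (a + 1)) (hne : ∀ b, u ≠ G.L b) :
    ∃ b, b ∈ G.A ∧ G.L b < u ∧ u < G.L (b + 1) ∧ G.x b = F.x a + l := by
  obtain ⟨b, hbA, hb1, hb2⟩ := find_interval G
    (lt_of_le_of_lt (F.L_nonneg a) h1) (lt_of_lt_of_le h2 (F.L_le_one (a + 1))) hne
  have key : ∀ t : ℝ, (G.x b ≤ t ↔ F.x a ≤ t - l) := by
    intro t
    rw [← G.le_cdf_iff hbA hb1 hb2.le t, Hl t, F.le_cdf_iff ha h1 h2.le (t - l)]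
  have k1 := (key (G.x b)).mp le_rfl
  have k2 := (key (F.x a + l)).mpr (by linarith)
  exact ⟨b, hbA, hb1, hb2, by linarith⟩

lemma struct_half (F G : DiscDist) (l : ℝ) (Hl : ∀ t : ℝ, G.cdf t = F.cdf (t - l)) {a : ℤ}
    (ha : a ∈ F.A) :
    ∃ b, b ∈ G.A ∧ G.x b = F.x a + l ∧ G.L b ≤ F.L a ∧ F.L (a + 1) ≤ G.L (b + 1) := by
  have hS : (Set.range G.L).Countable := Set.countable_range _
  have hlt : F.L a < F.L (a + 1) := F.L_lt_succ ha
  obtain ⟨u, hu1, hu2, hu3⟩ := exists_mem_Ioo_not_mem hlt hS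
  have hne : ∀ b, u ≠ G.L b := fun b hb => hu3 ⟨b, hb.symm⟩
  obtain ⟨b, hbA, hb1, hb2, hbx⟩ := pick_b F G l Hl ha hu1 hu2 hne
  refine ⟨b, hbA, hbx, ?_, ?_⟩
  · by_contra hc
    push_neg at hc
    obtain ⟨u', hu1', hu2', hu3'⟩ := exists_mem_Ioo_not_mem hc hS
    have hne' : ∀ b', u' ≠ G.L b' := fun b' hb => hu3' ⟨b', hb.symm⟩
    obtain ⟨b', hbA', hb1', hb2', hbx'⟩ := pick_b F G l Hl ha hu1' (by linarith) hne'
    have : b' = b := G.x_injOn hbA' hbA (by rw [hbx', hbx])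
    subst this
    linarith
  · by_contra hc
    push_neg at hc
    have hlow : F.L a < G.L (b + 1) := by linarith
    obtain ⟨u', hu1', hu2', hu3'⟩ := exists_mem_Ioo_not_mem hc hS
    have hne' : ∀ b', u' ≠ G.L b' := fun b' hb => hu3' ⟨b', hb.symm⟩
    obtain ⟨b', hbA', hb1', hb2', hbx'⟩ := pick_b F G l Hl ha (by linarith) hu2' hne'
    have : b' = b := G.x_injOn hbA' hbA (by rw [hbx', hbx])
    subst this
    linarith

lemma struct_full (F G : DiscDist) (l : ℝ) (Hl : ∀ t : ℝ, G.cdf t = F.cdf (t - l)) {a : ℤ}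
    (ha : a ∈ F.A) :
    ∃ b, b ∈ G.A ∧ G.x b = F.x a + l ∧ G.L b = F.L a ∧ G.L (b + 1) = F.L (a + 1) := by
  obtain ⟨b, hbA, hbx, hbL1, hbL2⟩ := struct_half F G l Hl ha
  have Hl' : ∀ t : ℝ, F.cdf t = G.cdf (t - (-l)) := by
    intro t
    rw [show t - (-l) = (t + l) from by ring, Hl (t + l), show t + l - l = t from by ring]
  obtain ⟨a', haA', hax', haL1', haL2'⟩ := struct_half G F (-l) Hl' hbA
  have haa : a' = a := F.x_injOn haA' ha (by rw [hax', hbx]; ring)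
  subst haa
  exact ⟨b, hbA, hbx, le_antisymm hbL1 haL1', le_antisymm (by exact haL2') hbL2⟩

lemma forced_of_cdf (F G : DiscDist) (l : ℝ) (Hl : ∀ t : ℝ, G.cdf t = F.cdf (t - l)) {a b : ℤ}
    (hr : DRel F G a b) :
    G.x b = F.x a + l ∧ G.L b = F.L a ∧ G.L (b + 1) = F.L (a + 1) := by
  obtain ⟨b0, hb0A, hx0, hL0, hL0'⟩ := struct_full F G l Hl hr.1
  have hlt := drel_lt hr
  have hbb : b = b0 := by
    by_contra hne
    rcases lt_or_gt_of_ne hne with hlt' | hgt'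
    · have := G.L_mono (by omega : b + 1 ≤ b0)
      linarith [hlt.2]
    · have := G.L_mono (by omega : b0 + 1 ≤ b)
      linarith [hlt.1]
  subst hbb
  exact ⟨hx0, hL0, hL0'⟩

lemma discoA_of_cdf (F G : DiscDist) (l : ℝ) (Hl : ∀ t : ℝ, G.cdf t = F.cdf (t - l)) :
    discoA F G := by
  constructor
  · intro a b hr
    obtain ⟨_, hL, hL'⟩ := forced_of_cdf F G l Hl hr
    have e1 := F.L_succ a
    have e2 := G.L_succ b
    linarith
  · intro a b hr hr'
    obtain ⟨hx1, -, -⟩ := forced_of_cdf F G l Hl hr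
    obtain ⟨hx2, -, -⟩ := forced_of_cdf F G l Hl hr'
    linarith

/-- Equivalence with respect to either discrete dispersive order holds exactly
when the two distributions differ by a shift. -/
theorem stmt_11 (F G : DiscDist) :
    ((discoA F G ∧ discoA G F) ↔ (discoO F G ∧ discoO G F)) ∧
    ((discoA F G ∧ discoA G F) ↔
      ∃ l : ℝ, ∀ t : ℝ, G.cdf t = F.cdf (t - l)) := by
  constructor
  · constructor
    · intro hAA
      exact ⟨discoO_of F G hAA, discoO_of G F ⟨hAA.2, hAA.1⟩⟩
    · intro hOO
      exact ⟨discoA_of_discoO hOO.1, discoA_of_discoO hOO.2⟩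
  · constructor
    · intro hAA
      obtain ⟨k, -, hmem, hp, -, l, hx⟩ := main_struct F G hAA
      exact ⟨l, cdf_of_struct F G k l hmem hp hx⟩
    · rintro ⟨l, hl⟩
      have hl' : ∀ t : ℝ, F.cdf t = G.cdf (t - (-l)) := by
        intro t
        rw [show t - (-l) = (t + l) from by ring, hl (t + l), show t + l - l = t from by ring]
      exact ⟨discoA_of_cdf F G l hl, discoA_of_cdf G F (-l) hl'⟩
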